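/- Let B ~ Binomial(k, 1/n) with k ≤ n/2 and let x ≥ 7/2. Then (E[B | B ≥ x] − x) · P[B ≥ x] ≤ (1/(x−1)) · exp(−(x − 1/2)). -/

import Mathlib

open Finset

/-- Probability mass function of `Binomial(k, p)`. -/
noncomputable def binomialPMF (k : ℕ) (p : ℝ) (i : ℕ) : ℝ :=
  (k.choose i : ℝ) * p ^ i * (1 - p) ^ (k - i)

/-- `P[B ≥ x]` for `B ~ Binomial(k, 1/n)`. -/
noncomputable def binTail (n k : ℕ) (x : ℝ) : ℝ :=
  ∑ i ∈ Finset.range (k + 1), if x ≤ (i : ℝ) then binomialPMF k (1 / (n : ℝ)) i else 0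

/-- `E[B | B ≥ x]` for `B ~ Binomial(k, 1/n)`. -/
noncomputable def binCondExp (n k : ℕ) (x : ℝ) : ℝ :=
  (∑ i ∈ Finset.range (k + 1),
      if x ≤ (i : ℝ) then (i : ℝ) * binomialPMF k (1 / (n : ℝ)) i else 0) / binTail n k x

private lemma key_nat : ∀ m : ℕ, 4 ≤ m → 5 * (m - 1) * 3 ^ m ≤ 4 * 2 ^ m * m.factorial := by
  intro m hm
  induction m with
  | zero => omega
  | succ m ih =>
    rcases Nat.lt_or_ge m 4 with h | h
    · interval_cases m <;> simp_all <;> norm_num [Nat.factorial]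
    · have ih' := ih h
      have h1 : 3 * m ≤ 4 * (m - 1) := by omega
      have : 5 * (m + 1 - 1) * 3 ^ (m + 1) = (3 * m) * (5 * 3 ^ m) := by
        simp only [Nat.add_sub_cancel, pow_succ]; ring
      rw [this]
      calc (3 * m) * (5 * 3 ^ m) ≤ (4 * (m - 1)) * (5 * 3 ^ m) := by
            exact Nat.mul_le_mul_right _ h1
        _ = 4 * (5 * (m - 1) * 3 ^ m) := by ring
        _ ≤ 4 * (4 * 2 ^ m * m.factorial) := Nat.mul_le_mul_left _ ih'
        _ ≤ (2 * (m + 1)) * (4 * 2 ^ m * m.factorial) := by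
            have : 4 ≤ 2 * (m + 1) := by omega
            exact Nat.mul_le_mul_right _ this
        _ = 4 * 2 ^ (m + 1) * (m + 1).factorial := by
            rw [Nat.factorial_succ, pow_succ]; ring

private lemma geom_tail_le (r : ℝ) (h0 : 0 ≤ r) (h1 : r < 1) (m N : ℕ) :
    ∑ i ∈ Finset.range N, (if m ≤ i then r ^ (i - m) else 0) ≤ 1 / (1 - r) := by
  have hr : (0:ℝ) < 1 - r := by linarith
  have hfil : (Finset.range N).filter (fun i => m ≤ i) = Finset.Ico m N := by
    ext i; simp [Finset.mem_filter, Finset.mem_Ico, and_comm]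
  rw [← Finset.sum_filter, hfil, Finset.sum_Ico_eq_sum_range]
  have heq : ∀ i ∈ Finset.range (N - m), r ^ (m + i - m) = r ^ i := by
    intro i _; congr 1; omega
  rw [Finset.sum_congr rfl heq]
  rcases eq_or_ne r 1 with rfl | hne
  · linarith
  · rw [geom_sum_eq hne]
    have h2 : (r ^ (N - m) - 1) / (r - 1) = (1 - r ^ (N - m)) / (1 - r) := by
      rw [div_eq_div_iff (by linarith) (by linarith)]; ring
    rw [h2]
    have hpow : (0:ℝ) ≤ r ^ (N - m) := pow_nonneg h0 _
    exact (div_le_div_iff_of_pos_right hr).mpr (by linarith)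

/-- Lemma `binomial`: for `B ~ Binomial(k, 1/n)` with `k ≤ n/2` and any `x ≥ 7/2`,
`(E[B | B ≥ x] − x) · P[B ≥ x] ≤ (1/(x−1)) · exp(−(x − 1/2))`. -/
theorem binomial_conditional_excess_bound (n k : ℕ) (hn : 0 < n) (hk : 2 * k ≤ n)
    (x : ℝ) (hx : 7 / 2 ≤ x) (hpos : 0 < binTail n k x) :
    (binCondExp n k x - x) * binTail n k x ≤ (1 / (x - 1)) * Real.exp (-(x - 1 / 2)) := by
  have hn1 : (1:ℝ) ≤ (n:ℝ) := by exact_mod_cast hn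
  have hkn : (2:ℝ) * (k:ℝ) ≤ (n:ℝ) := by exact_mod_cast hk
  have hp0 : (0:ℝ) ≤ 1 / (n:ℝ) := by positivity
  have hp1 : (1:ℝ) / (n:ℝ) ≤ 1 := by
    rw [div_le_one (by linarith)]; linarith
  have hkp : (k:ℝ) * (1 / (n:ℝ)) ≤ 1/2 := by
    rw [mul_one_div, div_le_div_iff₀ (by linarith) (by norm_num)]
    linarith
  set m := ⌈x⌉₊ with hmdef
  have hxm : x ≤ (m:ℝ) := Nat.le_ceil x
  have hm4 : 4 ≤ m := by
    have h3 : (3:ℝ) < x := by linarith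
    have := Nat.lt_ceil.mpr (by exact_mod_cast h3 : ((3:ℕ):ℝ) < x)
    omega
  have hmR : (4:ℝ) ≤ (m:ℝ) := by exact_mod_cast hm4
  have hmx : (m:ℝ) - 1 < x := by
    have := Nat.ceil_lt_add_one (by linarith : (0:ℝ) ≤ x)
    linarith
  set c : ℝ := (1/2:ℝ)^m / (m.factorial : ℝ) with hc
  set r : ℝ := 1 / ((m:ℝ) + 1) with hr
  have hc0 : 0 ≤ c := by positivity
  have hr0 : 0 ≤ r := by positivity
  have hr1 : r < 1 := by
    rw [hr, div_lt_one (by linarith)]; linarith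
  -- pmf bound
  have pmfB : ∀ i : ℕ, binomialPMF k (1 / (n:ℝ)) i ≤ (1/2:ℝ)^i / (i.factorial : ℝ) := by
    intro i
    rw [binomialPMF]
    have h1 : (1 - 1/(n:ℝ))^(k - i) ≤ 1 := pow_le_one₀ (by linarith) (by linarith)
    have h2 : ((k.choose i : ℕ):ℝ) ≤ (k:ℝ)^i / (i.factorial : ℝ) := Nat.choose_le_pow_div i k
    have hif : (0:ℝ) < (i.factorial : ℝ) := by exact_mod_cast Nat.factorial_pos i
    calc (k.choose i : ℝ) * (1/(n:ℝ))^i * (1 - 1/(n:ℝ))^(k-i)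
        ≤ (k.choose i : ℝ) * (1/(n:ℝ))^i * 1 := by
          apply mul_le_mul_of_nonneg_left h1 (by positivity)
      _ = (k.choose i : ℝ) * (1/(n:ℝ))^i := mul_one _
      _ ≤ ((k:ℝ)^i / (i.factorial:ℝ)) * (1/(n:ℝ))^i := by
          apply mul_le_mul_of_nonneg_right h2 (by positivity)
      _ = ((k:ℝ) * (1/(n:ℝ)))^i / (i.factorial:ℝ) := by
          rw [mul_pow]; ring
      _ ≤ (1/2:ℝ)^i / (i.factorial:ℝ) := by
          gcongr
  -- rewrite LHS as a sum
  have hS : (binCondExp n k x - x) * binTail n k x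
      = ∑ i ∈ Finset.range (k+1),
          (if x ≤ (i:ℝ) then ((i:ℝ) - x) * binomialPMF k (1/(n:ℝ)) i else 0) := by
    rw [binCondExp, sub_mul, div_mul_cancel₀ _ hpos.ne']
    rw [binTail, Finset.mul_sum, ← Finset.sum_sub_distrib]
    apply Finset.sum_congr rfl
    intro i _
    split_ifs with h
    · ring
    · ring
  -- termwise bound
  have hterm : ∀ i ∈ Finset.range (k+1),
      (if x ≤ (i:ℝ) then ((i:ℝ) - x) * binomialPMF k (1/(n:ℝ)) i else 0)
      ≤ c * (if m ≤ i then r ^ (i - m) else 0) := by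
    intro i _
    by_cases h : x ≤ (i:ℝ)
    · have hmi : m ≤ i := Nat.ceil_le.mpr h
      rw [if_pos h, if_pos hmi]
      obtain ⟨j, rfl⟩ := Nat.exists_eq_add_of_le hmi
      rw [Nat.add_sub_cancel_left]
      have hA : ((m + j : ℕ):ℝ) - x ≤ (j:ℝ) + 1 := by push_cast; linarith
      have hA0 : (0:ℝ) ≤ ((m + j : ℕ):ℝ) - x := by linarith
      have hpmf0 : 0 ≤ binomialPMF k (1/(n:ℝ)) (m + j) := by
        rw [binomialPMF]
        exact mul_nonneg (mul_nonneg (Nat.cast_nonneg _) (by positivity))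
          (pow_nonneg (by linarith) _)
      have hf1 : (m.factorial : ℝ) * ((m:ℝ)+1)^j ≤ ((m+j).factorial : ℝ) := by
        have := Nat.factorial_mul_pow_le_factorial (m := m) (n := j)
        exact_mod_cast this
      have hf2 : ((j:ℝ)+1) ≤ (2:ℝ)^j := by
        have := Nat.lt_two_pow_self (n := j)
        have h2 : j + 1 ≤ 2^j := this
        exact_mod_cast h2
      have hmf : (0:ℝ) < (m.factorial:ℝ) := by exact_mod_cast Nat.factorial_pos m
      have hmjf : (0:ℝ) < ((m+j).factorial:ℝ) := by exact_mod_cast Nat.factorial_pos (m+j)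
      calc (((m + j : ℕ):ℝ) - x) * binomialPMF k (1/(n:ℝ)) (m + j)
          ≤ ((j:ℝ)+1) * ((1/2:ℝ)^(m+j) / ((m+j).factorial : ℝ)) :=
            mul_le_mul hA (pmfB (m+j)) hpmf0 (by positivity)
        _ ≤ (2:ℝ)^j * ((1/2:ℝ)^(m+j) / ((m.factorial:ℝ) * ((m:ℝ)+1)^j)) := by
            apply mul_le_mul hf2 ?_ (by positivity) (by positivity)
            apply div_le_div_of_nonneg_left (by positivity) (by positivity) hf1
        _ = c * r^j := by
            rw [hc, hr, pow_add, div_pow, one_pow]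
            field_simp
            rw [← mul_pow, ← mul_pow]; field_simp
    · have hmi : ¬ m ≤ i := fun hmi => h (Nat.ceil_le.mp hmi)
      rw [if_neg h, if_neg hmi, mul_zero]
  -- sum the geometric bound
  have hsum2 : ∑ i ∈ Finset.range (k+1), c * (if m ≤ i then r^(i-m) else 0)
      ≤ c * (1/(1-r)) := by
    rw [← Finset.mul_sum]
    exact mul_le_mul_of_nonneg_left (geom_tail_le r hr0 hr1 m (k+1)) hc0
  -- numeric bounds
  have hfrac : 1/(1-r) ≤ 5/4 := by
    have h1r : 1 - r = (m:ℝ)/((m:ℝ)+1) := by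
      rw [hr]; field_simp; ring
    rw [h1r, one_div_div, div_le_div_iff₀ (by linarith) (by norm_num)]
    linarith
  have hstep1 : c * (1/(1-r)) ≤ (5/4) * c := by
    rw [mul_comm (5/4 : ℝ) c]
    exact mul_le_mul_of_nonneg_left hfrac hc0
  have hexp3 : Real.exp ((m:ℝ) - 1/2) ≤ (3:ℝ)^m := by
    calc Real.exp ((m:ℝ) - 1/2) ≤ Real.exp (m:ℝ) := Real.exp_le_exp.mpr (by linarith)
      _ = (Real.exp 1)^m := by rw [← Real.exp_one_pow]
      _ ≤ (3:ℝ)^m := by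
          apply pow_le_pow_left₀ (Real.exp_pos 1).le
          have := Real.exp_one_lt_d9; linarith
  have hkey : 5 * ((m:ℝ)-1) * 3^m ≤ 4 * 2^m * (m.factorial:ℝ) := by
    have h := key_nat m hm4
    have hcast : ((5 * (m-1) * 3^m : ℕ):ℝ) ≤ ((4 * 2^m * m.factorial : ℕ):ℝ) :=
      Nat.cast_le.mpr h
    push_cast [Nat.cast_sub (show 1 ≤ m by omega)] at hcast
    convert hcast using 2 <;> push_cast <;> ring
  have hm1 : (0:ℝ) < (m:ℝ) - 1 := by linarith
  have hmf : (0:ℝ) < (m.factorial:ℝ) := by exact_mod_cast Nat.factorial_pos m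
  have key2 : (5/4) * c * (((m:ℝ)-1) * Real.exp ((m:ℝ)-1/2)) ≤ 1 := by
    have cpos : (0:ℝ) ≤ (5/4) * c * ((m:ℝ)-1) := by
      apply mul_nonneg (by positivity) (by linarith)
    calc (5/4) * c * (((m:ℝ)-1) * Real.exp ((m:ℝ)-1/2))
        = ((5/4) * c * ((m:ℝ)-1)) * Real.exp ((m:ℝ)-1/2) := by ring
      _ ≤ ((5/4) * c * ((m:ℝ)-1)) * (3:ℝ)^m := mul_le_mul_of_nonneg_left hexp3 cpos
      _ = (5 * ((m:ℝ)-1) * 3^m) / (4 * 2^m * (m.factorial:ℝ)) := by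
          rw [hc]
          have h2m : (1/2:ℝ)^m = 1/(2:ℝ)^m := by rw [div_pow, one_pow]
          rw [h2m]
          field_simp
      _ ≤ 1 := by
          rw [div_le_one (by positivity)]
          exact hkey
  have hstep2 : (5/4) * c ≤ (1/((m:ℝ)-1)) * Real.exp (-((m:ℝ)-1/2)) := by
    rw [Real.exp_neg, one_div, ← mul_inv, ← one_div]
    rw [le_div_iff₀ (mul_pos hm1 (Real.exp_pos _))]
    nlinarith [key2]
  have hx1 : (0:ℝ) < x - 1 := by linarith
  have hstep3 : (1/((m:ℝ)-1)) * Real.exp (-((m:ℝ)-1/2)) ≤ (1/(x-1)) * Real.exp (-(x-1/2)) := by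
    apply mul_le_mul
    · exact one_div_le_one_div_of_le hx1 (by linarith)
    · exact Real.exp_le_exp.mpr (by linarith)
    · exact (Real.exp_pos _).le
    · exact (one_div_pos.mpr hx1).le
  calc (binCondExp n k x - x) * binTail n k x
      = ∑ i ∈ Finset.range (k+1),
          (if x ≤ (i:ℝ) then ((i:ℝ) - x) * binomialPMF k (1/(n:ℝ)) i else 0) := hS
    _ ≤ ∑ i ∈ Finset.range (k+1), c * (if m ≤ i then r^(i-m) else 0) :=
        Finset.sum_le_sum hterm
    _ ≤ c * (1/(1-r)) := hsum2
    _ ≤ (5/4) * c := hstep1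
    _ ≤ (1/((m:ℝ)-1)) * Real.exp (-((m:ℝ)-1/2)) := hstep2
    _ ≤ (1/(x-1)) * Real.exp (-(x-1/2)) := hstep3
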